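/- For the binary case $K = 2$ with $\Phi_2 = \{0, \pi\}$, the maximum of $|h_0 + \sum_{n=1}^N \epsilon_n h_n|$ over sign vectors $\epsilon \in \{-1, +1\}^N$ equals $\max_{1 \leq \ell \leq L} |h_0 + \sum_n \epsilon_n^{(\ell)} h_n|$, where $\lambda_1 < \cdots < \lambda_L$ ($L \leq 2N$) are the distinct sorted values of $\{(\alpha_n \pm \pi/2) \bmod 2\pi\}$ and $\epsilon_n^{(\ell)} = \mathrm{sign}(\cos(\angle\mu_\ell - \alpha_n))$ for any $\angle\mu_\ell$ chosen in the open arc $(\lambda_\ell, \lambda_{\ell+1})$. -/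

import Mathlib

open Real Complex

/-- Circular distance on ℝ / 2πℤ. -/
noncomputable def cdist (x y : ℝ) : ℝ := sInf (Set.range fun m : ℤ => |x - y + 2 * π * m|)

/-- The discrete phase-shift set Φ_K = {ω, 2ω, …, Kω}, ω = 2π/K. -/
def Phi (K : ℕ) : Set ℝ := {θ | ∃ k : ℕ, 1 ≤ k ∧ k ≤ K ∧ θ = k * (2 * π / K)}

lemma aux_exp (x : ℝ) : Complex.exp ((x:ℂ) * Complex.I) = (Real.cos x : ℂ) + (Real.sin x : ℂ) * Complex.I := by
  rw [Complex.exp_mul_I, Complex.ofReal_cos, Complex.ofReal_sin]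

lemma aux_re (r b a t : ℝ) :
    (((r:ℂ) * ((b:ℂ) * Complex.exp ((a:ℂ) * Complex.I))) * Complex.exp (((-t : ℝ):ℂ) * Complex.I)).re
      = r * (b * Real.cos (t - a)) := by
  rw [aux_exp, aux_exp, Real.cos_sub]
  simp [Complex.mul_re, Complex.mul_im, Real.cos_neg, Real.sin_neg, Complex.cos_ofReal_re, Complex.sin_ofReal_re]
  ring

lemma aux_cs {a t : ℝ} (he : Complex.exp ((a:ℂ) * Complex.I) = Complex.exp ((t:ℂ) * Complex.I)) :
    Real.cos a = Real.cos t ∧ Real.sin a = Real.sin t := by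
  rw [aux_exp, aux_exp] at he
  have h4a := congrArg Complex.re he
  have h4b := congrArg Complex.im he
  simp only [Complex.add_re, Complex.add_im, Complex.mul_re, Complex.mul_im,
    Complex.ofReal_re, Complex.ofReal_im, Complex.I_re, Complex.I_im] at h4a h4b
  constructor <;> linarith

theorem stmt_19 (N : ℕ) (β α : Fin (N + 1) → ℝ) (hβ : ∀ n, 0 < β n)
    (h : Fin (N + 1) → ℂ)
    (hh : ∀ n, h n = (β n : ℂ) * Complex.exp ((α n : ℂ) * Complex.I)) :
    ∃ μ : ℂ, μ ≠ 0 ∧ ‖μ‖ = 1 ∧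
      (∀ n : Fin N, Real.cos (μ.arg - α n.succ) ≠ 0) ∧
      ∀ ε : Fin N → ℝ, (∀ n, ε n = 1 ∨ ε n = -1) →
        ‖h 0 + ∑ n : Fin N, (ε n : ℂ) * h n.succ‖
          ≤ ‖h 0 + ∑ n : Fin N,
              ((if 0 < Real.cos (μ.arg - α n.succ) then (1 : ℂ) else -1) * h n.succ)‖ := by
  classical
  set S : (Fin N → ℝ) → ℂ := fun ε => h 0 + ∑ n : Fin N, (ε n : ℂ) * h n.succ with hSdef
  obtain ⟨b, -, hb⟩ := Finset.exists_max_image (Finset.univ : Finset (Fin N → Bool))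
    (fun b => ‖S fun n => if b n then (1:ℝ) else -1‖) ⟨fun _ => true, Finset.mem_univ _⟩
  set ε0 : Fin N → ℝ := fun n => if b n then 1 else -1 with hε0
  set θ0 : ℝ := (S ε0).arg with hθ0
  set c : Fin (N+1) → ℝ := fun n => Real.cos (θ0 - α n) with hc
  set m : ℝ := Finset.univ.inf' Finset.univ_nonempty
      (fun n : Fin (N+1) => if c n = 0 then 1 else |c n|) with hm
  have hm0 : 0 < m := by
    rw [hm, Finset.lt_inf'_iff]
    intro n _
    split
    · norm_num
    · exact abs_pos.mpr ‹_›
  have hmle : ∀ n, c n ≠ 0 → m ≤ |c n| := by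
    intro n hn
    have h1 := Finset.inf'_le (f := fun n : Fin (N+1) => if c n = 0 then 1 else |c n|)
      (Finset.mem_univ n)
    rw [if_neg hn] at h1
    exact h1
  set δ : ℝ := min (m/2) (1/2) with hδ
  have hδ0 : 0 < δ := lt_min (by linarith) (by norm_num)
  have hδm : δ ≤ m/2 := min_le_left _ _
  have hδle : δ ≤ 1/2 := min_le_right _ _
  have hsin : Real.sin δ ≤ δ := Real.sin_le hδ0.le
  have hsinpos : 0 < Real.sin δ := Real.sin_pos_of_pos_of_lt_pi hδ0 (by nlinarith [Real.pi_gt_three])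
  have hcos : (1/2:ℝ) < Real.cos δ := by nlinarith [Real.one_sub_sq_div_two_le_cos (x := δ)]
  have hkey : Real.sin δ < m * Real.cos δ := by nlinarith
  set θ : ℝ := θ0 + δ with hθ
  set g : Fin (N+1) → ℝ := fun n => Real.cos (θ - α n) with hgdef
  have hg : ∀ n, g n = c n * Real.cos δ - Real.sin (θ0 - α n) * Real.sin δ := by
    intro n
    show Real.cos (θ - α n) = Real.cos (θ0 - α n) * Real.cos δ - Real.sin (θ0 - α n) * Real.sin δ
    rw [show θ - α n = (θ0 - α n) + δ by rw [hθ]; ring, Real.cos_add]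
  have hs1 : ∀ n : Fin (N+1), Real.sin (θ0 - α n) ≤ 1 := fun n => Real.sin_le_one _
  have hs2 : ∀ n : Fin (N+1), -1 ≤ Real.sin (θ0 - α n) := fun n => Real.neg_one_le_sin _
  have hpos : ∀ n, 0 < c n → 0 < g n := by
    intro n hcn
    have h1 : m ≤ c n := le_trans (hmle n hcn.ne') (le_of_eq (abs_of_pos hcn))
    have := hg n
    nlinarith [hs1 n, hs2 n, hsinpos, hcos]
  have hneg : ∀ n, c n < 0 → g n < 0 := by
    intro n hcn
    have h1 : m ≤ -c n := le_trans (hmle n hcn.ne) (le_of_eq (abs_of_neg hcn))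
    have := hg n
    nlinarith [hs1 n, hs2 n, hsinpos, hcos]
  have hgne : ∀ n, g n ≠ 0 := by
    intro n
    rcases lt_trichotomy (c n) 0 with h0 | h0 | h0
    · exact (hneg n h0).ne
    · have hsq : Real.sin (θ0 - α n) ^ 2 = 1 := by
        have h3 := Real.sin_sq_add_cos_sq (θ0 - α n)
        have h4 : Real.cos (θ0 - α n) = 0 := h0
        nlinarith
      have h5 := hg n
      rw [h0] at h5
      intro hz
      rw [hz] at h5
      have h6 : Real.sin (θ0 - α n) * Real.sin δ = 0 := by linarith
      rcases mul_eq_zero.mp h6 with h7 | h7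
      · rw [h7] at hsq; norm_num at hsq
      · exact hsinpos.ne' h7
    · exact (hpos n h0).ne'
  have hsign : ∀ n, (if 0 < g n then (1:ℝ) else -1) * c n = |c n| := by
    intro n
    rcases lt_trichotomy (c n) 0 with h0 | h0 | h0
    · rw [if_neg (by push_neg; exact (hneg n h0).le), abs_of_neg h0]; ring
    · rw [h0]; simp
    · rw [if_pos (hpos n h0), abs_of_pos h0]; ring
  -- the witness
  have hexp : Complex.exp (((Complex.exp ((θ:ℂ) * Complex.I)).arg : ℂ) * Complex.I)
      = Complex.exp ((θ:ℂ) * Complex.I) := by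
    have h2 := Complex.norm_mul_exp_arg_mul_I (Complex.exp ((θ:ℂ) * Complex.I))
    rw [Complex.norm_exp_ofReal_mul_I] at h2
    simpa using h2
  have hargcos : ∀ x : ℝ,
      Real.cos ((Complex.exp ((θ:ℂ) * Complex.I)).arg - x) = Real.cos (θ - x) := by
    have h4 := aux_cs hexp
    intro x
    rw [Real.cos_sub, Real.cos_sub, h4.1, h4.2]
  refine ⟨Complex.exp ((θ:ℂ) * Complex.I), Complex.exp_ne_zero _,
    Complex.norm_exp_ofReal_mul_I θ, ?_, ?_⟩
  · intro n
    rw [hargcos]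
    exact hgne n.succ
  intro ε hε
  set v : ℂ := Complex.exp (((-θ0 : ℝ):ℂ) * Complex.I) with hv
  have habsv : ‖v‖ = 1 := Complex.norm_exp_ofReal_mul_I _
  set sgn : Fin N → ℝ := fun n => if 0 < g n.succ then 1 else -1 with hsgn
  have hcoe : ∀ n : Fin N,
      (if 0 < Real.cos ((Complex.exp ((θ:ℂ) * Complex.I)).arg - α n.succ) then (1:ℂ) else -1)
        = ((sgn n : ℝ) : ℂ) := by
    intro n
    rw [hargcos]
    show (if 0 < g n.succ then (1:ℂ) else -1) = ((sgn n : ℝ) : ℂ)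
    rw [hsgn]
    by_cases hx : 0 < g n.succ
    · rw [if_pos hx]
      simp only [if_pos hx, Complex.ofReal_one]
    · rw [if_neg hx]
      simp only [if_neg hx]
      norm_num
  have hSre : ∀ ε' : Fin N → ℝ, ((S ε') * v).re
      = β 0 * Real.cos (θ0 - α 0) + ∑ n : Fin N, ε' n * (β n.succ * Real.cos (θ0 - α n.succ)) := by
    intro ε'
    have hex : S ε' = h 0 + ∑ n : Fin N, ((ε' n : ℂ) * h n.succ) := rfl
    rw [hex, add_mul, Finset.sum_mul, Complex.add_re, Complex.re_sum]
    congr 1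
    · have h9 : h 0 * v = ((1:ℝ):ℂ) * ((β 0 : ℂ) * Complex.exp ((α 0 : ℂ) * Complex.I)) * v := by
        rw [hh 0]; push_cast; ring
      rw [h9, hv, aux_re]; ring
    · refine Finset.sum_congr rfl fun n _ => ?_
      rw [hh n.succ, hv]
      exact aux_re _ _ _ _
  have hA : ‖S ε0‖ = ((S ε0) * v).re := by
    have h2 := Complex.norm_mul_exp_arg_mul_I (S ε0)
    have h3 : (S ε0) * v = ((‖S ε0‖ : ℝ) : ℂ) := by
      conv_lhs => rw [← h2]
      rw [hv, mul_assoc, ← Complex.exp_add]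
      rw [show ((S ε0).arg : ℂ) * Complex.I + ((-θ0 : ℝ):ℂ) * Complex.I = 0 by
        rw [hθ0]; push_cast; ring]
      rw [Complex.exp_zero, mul_one]
    rw [h3, Complex.ofReal_re]
  have hmax : ‖S ε‖ ≤ ‖S ε0‖ := by
    have hεb : (fun n => if (if ε n = 1 then true else false) = true then (1:ℝ) else -1) = ε := by
      funext n; rcases hε n with h1 | h1 <;> norm_num [h1]
    have h5 := hb (fun n => if ε n = 1 then true else false) (Finset.mem_univ _)
    rwa [hεb] at h5
  have hmid : ((S ε0) * v).re ≤ ((S sgn) * v).re := by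
    rw [hSre, hSre]
    apply add_le_add_right
    refine Finset.sum_le_sum fun n _ => ?_
    have hβn := (hβ n.succ).le
    have hcn : Real.cos (θ0 - α n.succ) = c n.succ := rfl
    rw [hcn]
    have hrhs : sgn n * (β n.succ * c n.succ) = β n.succ * |c n.succ| := by
      rw [hsgn]
      simp only
      rw [← hsign n.succ]
      ring
    rw [hrhs]
    have hε01 : ε0 n = 1 ∨ ε0 n = -1 := by
      rw [hε0]; by_cases hbn : b n = true <;> simp [hbn]
    have hstep : ε0 n * c n.succ ≤ |c n.succ| := by
      rcases hε01 with h1 | h1 <;> rw [h1]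
      · rw [one_mul]; exact le_abs_self _
      · rw [neg_one_mul]; exact neg_le_abs _
    calc ε0 n * (β n.succ * c n.succ) = β n.succ * (ε0 n * c n.succ) := by ring
      _ ≤ β n.succ * |c n.succ| := mul_le_mul_of_nonneg_left hstep hβn
  have hB : ((S sgn) * v).re ≤ ‖S sgn‖ := by
    calc ((S sgn) * v).re ≤ ‖(S sgn) * v‖ := Complex.re_le_norm _
      _ = ‖S sgn‖ := by rw [norm_mul, habsv, mul_one]
  have hfin : S sgn = h 0 + ∑ n : Fin N,
      ((if 0 < Real.cos ((Complex.exp ((θ:ℂ) * Complex.I)).arg - α n.succ) then (1:ℂ) else -1)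
        * h n.succ) := by
    show h 0 + _ = _
    congr 1
    exact Finset.sum_congr rfl fun n _ => by rw [hcoe n]
  calc ‖h 0 + ∑ n : Fin N, (ε n : ℂ) * h n.succ‖
      = ‖S ε‖ := rfl
    _ ≤ ‖S ε0‖ := hmax
    _ = ((S ε0) * v).re := hA
    _ ≤ ((S sgn) * v).re := hmid
    _ ≤ ‖S sgn‖ := hB
    _ = _ := congrArg (‖·‖) hfin
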